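/- Let X be a finite set, let ι ∈ Sym(X) be an involution with no fixed points, and let ζ ∈ Sym(X). Permutations act on functions f : X → ℂ by (σ.f)(x) = f(σ⁻¹x). Suppose that every function f : X → ℂ satisfying f(ι.x) = −f(x) for all x ∈ X is fixed by ζ, i.e., f(ζ⁻¹x) = f(x) for all x ∈ X. Then ζ is the identity permutation. -/

import Mathlib

/-- Let `ι ∈ Sym(X)` be a fixed-point-free involution of a finite set `X` and
`ζ ∈ Sym(X)`. If every function `f : X → ℂ` that flips sign along `ι`
(`f(ι.x) = −f(x)`) is fixed by the action of `ζ` (`(ζ.f)(x) = f(ζ⁻¹ x) = f(x)`),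
then `ζ` is the identity. -/
theorem perm_eq_one_of_fixes_sign_flipping (X : Type*) [Fintype X]
    (ι ζ : Equiv.Perm X) (hι2 : ι * ι = 1) (hιfree : ∀ x, ι x ≠ x)
    (h : ∀ f : X → ℂ, (∀ x, f (ι x) = - f x) → ∀ x, f (ζ⁻¹ x) = f x) :
    ζ = 1 := by
  classical
  have hinv : ∀ x, ι (ι x) = x := fun x => by
    have := congrArg (fun σ => σ x) hι2; simpa using this
  ext x₀
  suffices hz : ζ⁻¹ x₀ = x₀ by
    have := congrArg ζ hz
    simpa using this.symm
  set f : X → ℂ := fun x => if x = x₀ then 1 else if x = ι x₀ then -1 else 0 with hf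
  have hflip : ∀ x, f (ι x) = - f x := by
    intro x
    by_cases h1 : x = x₀
    · subst h1
      simp [hf, hιfree x]
    · by_cases h2 : x = ι x₀
      · subst h2
        simp only [hf, hinv]
        rw [if_neg (hιfree x₀)]
        norm_num
      · have hι1 : ι x ≠ x₀ := fun hc => h2 (by rw [← hc, hinv])
        have hι2' : ι x ≠ ι x₀ := fun hc => h1 (ι.injective hc)
        simp [hf, h1, h2, hι1, hι2']
  have key := h f hflip x₀
  have hfx₀ : f x₀ = 1 := by simp [hf]
  rw [hfx₀] at key
  by_contra hne
  by_cases h2 : ζ⁻¹ x₀ = ι x₀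
  · rw [hf] at key; simp [h2, (hιfree x₀)] at key
    norm_num at key
  · rw [hf] at key; rw [Equiv.Perm.inv_def] at hne h2; simp [hne, h2] at key
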